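/- Let A be a finite alphabet with |A| ≥ 2 and n ≥ 1. If S ⊆ nA^* is a finite maximal product code, then S can be reached from {(ε,...,ε)} by a finite sequence of one-step restrictions. -/

import Mathlib

/-- A prefix code: no element is a strict prefix of another. -/
def PrefixCode {A : Type*} (P : Set (List A)) : Prop :=
  ∀ p ∈ P, ∀ q ∈ P, p <+: q → p = q

/-- Two `n`-tuples of strings have a join iff they are coordinatewise prefix-comparable. -/
def HasJoin {A : Type*} {n : ℕ} (u v : Fin n → List A) : Prop :=
  ∀ i, u i <+: v i ∨ v i <+: u i

/-- A joinless code in `nA^*`. -/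
def JoinlessCode {A : Type*} {n : ℕ} (S : Set (Fin n → List A)) : Prop :=
  ∀ u ∈ S, ∀ v ∈ S, u ≠ v → ¬ HasJoin u v

/-- A maximal joinless code in `nA^*`. -/
def MaxJoinlessCode {A : Type*} {n : ℕ} (S : Set (Fin n → List A)) : Prop :=
  JoinlessCode S ∧ ∀ T : Set (Fin n → List A), JoinlessCode T → S ⊆ T → S = T

/-- A product code in `nA^*`: a cartesian product of `n` prefix codes. -/
def IsProductCode {A : Type*} {n : ℕ} (S : Set (Fin n → List A)) : Prop :=
  ∃ P : Fin n → Set (List A), (∀ i, PrefixCode (P i)) ∧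
    S = {u | ∀ i, u i ∈ P i}

/-- One-step restriction: `Q` is obtained from `P` by replacing some `p ∈ P` by the
set of all `(p_1,...,p_{i-1}, p_i a, p_{i+1},...,p_n)` for `a ∈ A`. -/
def RestrStep {A : Type*} {n : ℕ} (P Q : Set (Fin n → List A)) : Prop :=
  ∃ p ∈ P, ∃ i : Fin n,
    Q = (P \ {p}) ∪ {q | ∃ a : A, q = Function.update p i (p i ++ [a])}

/-- Reachability by a finite sequence of one-step restrictions. -/
def Reachable {A : Type*} {n : ℕ} (X Y : Set (Fin n → List A)) : Prop :=
  Relation.ReflTransGen RestrStep X Y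

/-- Every finite maximal product code can be reached from the tuple of empty strings by
a finite sequence of one-step restrictions. -/

def Step1 {A : Type*} (Q Q' : Set (List A)) : Prop :=
  ∃ q ∈ Q, Q' = (Q \ {q}) ∪ {x | ∃ a : A, x = q ++ [a]}

def MaxPrefixCode {A : Type*} (P : Set (List A)) : Prop :=
  PrefixCode P ∧ ∀ w : List A, ∃ p ∈ P, p <+: w ∨ w <+: p

lemma one_dim {A : Type*} [Fintype A] (hA : 2 ≤ Fintype.card A) :
    ∀ N (P : Set (List A)), P.Finite → P.ncard ≤ N → MaxPrefixCode P →
      Relation.ReflTransGen Step1 {([] : List A)} P := by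
  intro N
  induction N using Nat.strong_induction_on with
  | _ N ih =>
    intro P hfin hcard hmax
    by_cases hnil : ([] : List A) ∈ P
    · have hP : P = {([] : List A)} := Set.eq_singleton_iff_unique_mem.mpr
        ⟨hnil, fun q hq => (hmax.1 [] hnil q hq List.nil_prefix).symm⟩
      rw [hP]
    · -- P is nonempty
      obtain ⟨p, hpP, -⟩ := hmax.2 []
      obtain ⟨p₀, hp₀F, hp₀max⟩ := Finset.exists_max_image hfin.toFinset List.length
        ⟨p, hfin.mem_toFinset.mpr hpP⟩
      have hp₀P : p₀ ∈ P := hfin.mem_toFinset.mp hp₀F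
      have hmaxlen : ∀ q ∈ P, q.length ≤ p₀.length := fun q hq =>
        hp₀max q (hfin.mem_toFinset.mpr hq)
      obtain ⟨w, a, hwa⟩ : ∃ w a, p₀ = w ++ [a] := by
        rcases List.eq_nil_or_concat p₀ with h | ⟨w, a, h⟩
        · exact absurd (h ▸ hp₀P) hnil
        · exact ⟨w, a, by simpa [List.concat_eq_append] using h⟩
      have hwp₀ : w <+: p₀ := ⟨[a], hwa.symm⟩
      have hw_notP : w ∉ P := by
        intro hw
        have := hmax.1 w hw p₀ hp₀P hwp₀
        rw [hwa] at this
        simpa using congrArg List.length this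
      have hlenp₀ : p₀.length = w.length + 1 := by simp [hwa]
      have hsib : ∀ b : A, w ++ [b] ∈ P := by
        intro b
        obtain ⟨q, hqP, hq⟩ := hmax.2 (w ++ [b])
        rcases hq with h | h
        · rcases List.prefix_concat_iff.mp h with rfl | h'
          · exact hqP
          · exfalso
            have hqp : q = p₀ := hmax.1 q hqP p₀ hp₀P (h'.trans hwp₀)
            have := h'.length_le
            rw [hqp, hlenp₀] at this
            omega
        · have h1 : q.length ≤ p₀.length := hmaxlen q hqP
          have h2 : (w ++ [b]).length ≤ q.length := h.length_le
          have : w ++ [b] = q := h.eq_of_length (by simp at h2 ⊢; omega)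
          exact this ▸ hqP
      set Sib : Set (List A) := {x | ∃ b : A, x = w ++ [b]} with hSibdef
      have hSibP : Sib ⊆ P := by rintro x ⟨b, rfl⟩; exact hsib b
      have hinj : Function.Injective (fun b : A => w ++ [b]) := by
        intro b c h; simpa using h
      have hSibeq : Sib = (fun b : A => w ++ [b]) '' Set.univ := by
        ext x; simp [hSibdef, eq_comm]
      have hSibcard : Sib.ncard = Fintype.card A := by
        rw [hSibeq, Set.ncard_image_of_injective _ hinj, Set.ncard_univ,
          Nat.card_eq_fintype_card]
      set P' : Set (List A) := (P \ Sib) ∪ {w} with hP'def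
      have hfin' : P'.Finite := ((hfin.subset Set.diff_subset).union (Set.finite_singleton w))
      have hnotin : ∀ x ∈ P, w <+: x → x ∈ Sib := by
        intro x hx hwx
        rcases hwx with ⟨t, rfl⟩
        cases t with
        | nil =>
          exact absurd (by simpa using hx) hw_notP
        | cons c t' =>
          have hc : w ++ [c] <+: w ++ (c :: t') := by
            refine ⟨t', by simp⟩
          have := hmax.1 (w ++ [c]) (hsib c) (w ++ (c :: t')) hx hc
          exact ⟨c, this.symm⟩
      have hpc' : PrefixCode P' := by
        rintro x hx y hy hxy
        rcases hx with ⟨hxP, hxS⟩ | hx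
        · rcases hy with ⟨hyP, hyS⟩ | hy
          · exact hmax.1 x hxP y hyP hxy
          · -- y = w, x <+: w, x ∈ P
            have hyw : y = w := hy
            subst hyw
            exfalso
            have hx : x = p₀ := hmax.1 x hxP p₀ hp₀P (hxy.trans hwp₀)
            have hl := hxy.length_le
            rw [hx, hlenp₀] at hl
            omega
        · rcases hx with rfl
          rcases hy with ⟨hyP, hyS⟩ | hy
          · exact absurd (hnotin y hyP hxy) hyS
          · rcases hy with rfl; rfl
      have hmx' : ∀ v : List A, ∃ p ∈ P', p <+: v ∨ v <+: p := by
        intro v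
        obtain ⟨q, hqP, hq⟩ := hmax.2 v
        by_cases hqS : q ∈ Sib
        · obtain ⟨b, rfl⟩ := hqS
          rcases hq with h | h
          · have hwb : w <+: w ++ [b] := ⟨[b], rfl⟩
            exact ⟨w, Or.inr rfl, Or.inl (hwb.trans h)⟩
          · rcases List.prefix_concat_iff.mp h with rfl | h'
            · exact ⟨w, Or.inr rfl, Or.inl ⟨[b], rfl⟩⟩
            · exact ⟨w, Or.inr rfl, Or.inr h'⟩
        · exact ⟨q, Or.inl ⟨hqP, hqS⟩, hq⟩
      have hstep : Step1 P' P := by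
        refine ⟨w, Or.inr rfl, ?_⟩
        have h1 : P' \ {w} = P \ Sib := by
          ext x
          simp only [hP'def, Set.mem_diff, Set.mem_union, Set.mem_singleton_iff]
          constructor
          · rintro ⟨h | h, hne⟩
            · exact h
            · exact absurd h hne
          · rintro ⟨hxP, hxS⟩
            exact ⟨Or.inl ⟨hxP, hxS⟩, fun he => hw_notP (he ▸ hxP)⟩
        rw [h1]
        exact (Set.diff_union_of_subset hSibP).symm
      have hcard' : P'.ncard < P.ncard := by
        have h1 : (P \ Sib).ncard = P.ncard - Sib.ncard := Set.ncard_diff hSibP (hfin.subset hSibP)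
        have h2 : P'.ncard ≤ (P \ Sib).ncard + 1 := by
          have := Set.ncard_union_le (P \ Sib) {w}
          simpa [hP'def] using this
        have h3 : Sib.ncard ≤ P.ncard := Set.ncard_le_ncard hSibP hfin
        omega
      have hrec := ih P'.ncard (lt_of_lt_of_le hcard' hcard) P' hfin' le_rfl ⟨hpc', hmx'⟩
      exact hrec.tail hstep
lemma embed {A : Type*} {n : ℕ} (i : Fin n) (u : Fin n → List A)
    (T : Set (Fin n → List A))
    (hT : ∀ x ∈ T, ∀ y : List A, x ≠ Function.update u i y)
    {Q P : Set (List A)} (h : Relation.ReflTransGen Step1 Q P) :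
    Reachable (T ∪ (Function.update u i) '' Q) (T ∪ (Function.update u i) '' P) := by
  induction h with
  | refl => exact Relation.ReflTransGen.refl
  | tail _ hstep ih =>
    rename_i Q1 Q2 _
    refine ih.tail ?_
    obtain ⟨q, hq, rfl⟩ := hstep
    refine ⟨Function.update u i q, Or.inr ⟨q, hq, rfl⟩, i, ?_⟩
    have hinj := Function.update_injective u i
    have hkey : {x | ∃ a : A, x = Function.update (Function.update u i q) i
        ((Function.update u i q) i ++ [a])} =
        (Function.update u i) '' {x | ∃ a : A, x = q ++ [a]} := by
      ext x
      simp only [Function.update_self, Function.update_idem, Set.mem_setOf_eq, Set.mem_image]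
      constructor
      · rintro ⟨a, rfl⟩; exact ⟨q ++ [a], ⟨a, rfl⟩, rfl⟩
      · rintro ⟨y, ⟨a, rfl⟩, rfl⟩; exact ⟨a, rfl⟩
    rw [hkey]
    have h1 : (T ∪ (Function.update u i) '' Q1) \ {Function.update u i q} =
        T ∪ ((Function.update u i) '' (Q1 \ {q})) := by
      rw [Set.union_diff_distrib, Set.diff_singleton_eq_self (fun hc => hT _ hc q rfl),
        Set.image_diff hinj, Set.image_singleton]
    rw [h1, Set.union_assoc, ← Set.image_union]
lemma grow {A : Type*} {n : ℕ} (i : Fin n) (Pi : Set (List A))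
    (hreach : Relation.ReflTransGen Step1 {([] : List A)} Pi)
    (G : Set (Fin n → List A)) (F : Finset (Fin n → List A))
    (hF : ∀ u ∈ F, u i = [])
    (hG : ∀ x ∈ G, ∀ u ∈ F, ∀ y : List A, x ≠ Function.update u i y) :
    Reachable (G ∪ ↑F) (G ∪ ⋃ u ∈ F, (Function.update u i) '' Pi) := by
  classical
  induction F using Finset.induction_on generalizing G with
  | empty => simp; exact Relation.ReflTransGen.refl
  | insert u F hnotmem ih =>
    have hui : u i = [] := hF u (Finset.mem_insert_self u F)
    have hsingle : ({u} : Set (Fin n → List A)) = (Function.update u i) '' {[]} := by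
      rw [Set.image_singleton, ← hui, Function.update_eq_self]
    have hdis1 : ∀ x ∈ (G ∪ ↑F : Set (Fin n → List A)), ∀ y : List A,
        x ≠ Function.update u i y := by
      rintro x (hx | hx) y hxy
      · exact hG x hx u (Finset.mem_insert_self u F) y hxy
      · have hxi : x i = [] := hF x (Finset.mem_insert_of_mem hx)
        have hy : y = [] := by rw [hxy, Function.update_self] at hxi; exact hxi
        rw [hy, ← hui, Function.update_eq_self] at hxy
        exact hnotmem (hxy ▸ hx)
    have step1 : Reachable ((G ∪ ↑F) ∪ (Function.update u i) '' {[]})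
        ((G ∪ ↑F) ∪ (Function.update u i) '' Pi) := embed i u _ hdis1 hreach
    have hG' : ∀ x ∈ (G ∪ (Function.update u i) '' Pi),
        ∀ v ∈ F, ∀ y : List A, x ≠ Function.update v i y := by
      rintro x (hx | ⟨z, hz, rfl⟩) v hv y hxy
      · exact hG x hx v (Finset.mem_insert_of_mem hv) y hxy
      · -- Function.update u i z = Function.update v i y with u ≠ v
        have huv : u ≠ v := fun h => hnotmem (h ▸ hv)
        obtain ⟨j, hj⟩ : ∃ j, u j ≠ v j := Function.ne_iff.mp huv
        have hji : j ≠ i := by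
          intro h; rw [h, hui, hF v (Finset.mem_insert_of_mem hv)] at hj; exact hj rfl
        have := congrFun hxy j
        rw [Function.update_of_ne hji, Function.update_of_ne hji] at this
        exact hj this
    have step2 : Reachable ((G ∪ (Function.update u i) '' Pi) ∪ ↑F)
        ((G ∪ (Function.update u i) '' Pi) ∪ ⋃ v ∈ F, (Function.update v i) '' Pi) :=
      ih (G ∪ (Function.update u i) '' Pi) (fun v hv => hF v (Finset.mem_insert_of_mem hv)) hG'
    have e1 : (G ∪ ↑(insert u F) : Set (Fin n → List A)) =
        (G ∪ ↑F) ∪ (Function.update u i) '' {[]} := by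
      rw [← hsingle, Finset.coe_insert, Set.insert_eq,
        Set.union_comm ({u} : Set (Fin n → List A)) (↑F), ← Set.union_assoc]
    have e2 : ((G ∪ ↑F) ∪ (Function.update u i) '' Pi) =
        ((G ∪ (Function.update u i) '' Pi) ∪ ↑F) := Set.union_right_comm G (↑F) _
    have e3 : ((G ∪ (Function.update u i) '' Pi) ∪ ⋃ v ∈ F, (Function.update v i) '' Pi) =
        G ∪ ⋃ v ∈ insert u F, (Function.update v i) '' Pi := by
      rw [Finset.set_biUnion_insert, ← Set.union_assoc]
    rw [e1, ← e3]
    exact step1.trans (by rw [e2]; exact step2)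

lemma chain {A : Type*} {n : ℕ} (P : Fin n → Set (List A))
    (hfinP : ∀ i, (P i).Finite)
    (hreach : ∀ i, Relation.ReflTransGen Step1 {([] : List A)} (P i)) :
    ∀ k : ℕ, Reachable {fun _ => ([] : List A)}
      {u : Fin n → List A | ∀ i : Fin n, if (i : ℕ) < k then u i ∈ P i else u i = []} := by
  classical
  intro k
  induction k with
  | zero =>
    have he : {u : Fin n → List A | ∀ i : Fin n, if (i : ℕ) < 0 then u i ∈ P i else u i = []}
        = {fun _ => ([] : List A)} := by
      ext u
      simp only [Nat.not_lt_zero, if_false, Set.mem_setOf_eq, Set.mem_singleton_iff, funext_iff]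
    rw [he]
    exact Relation.ReflTransGen.refl
  | succ k ih =>
    set Sk := {u : Fin n → List A | ∀ i : Fin n, if (i : ℕ) < k then u i ∈ P i else u i = []}
      with hSkdef
    set Sk1 := {u : Fin n → List A | ∀ i : Fin n, if (i : ℕ) < k + 1 then u i ∈ P i else u i = []}
      with hSk1def
    by_cases hk : k < n
    · set i₀ : Fin n := ⟨k, hk⟩ with hi₀
      have hSkfin : Sk.Finite := by
        refine Set.Finite.subset (Set.Finite.pi (fun i => (hfinP i).insert [])) ?_
        intro u hu i _
        have := hu i
        by_cases h : (i : ℕ) < k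
        · rw [if_pos h] at this; exact Set.mem_insert_of_mem _ this
        · rw [if_neg h] at this; exact this ▸ Set.mem_insert _ _
      set F : Finset (Fin n → List A) := hSkfin.toFinset with hFdef
      have hFmem : ∀ u, u ∈ F ↔ u ∈ Sk := fun u => hSkfin.mem_toFinset
      have hF0 : ∀ u ∈ F, u i₀ = [] := by
        intro u hu
        have := (hFmem u).mp hu i₀
        rwa [if_neg (by simp [hi₀])] at this
      have hgrow := grow i₀ (P i₀) (hreach i₀) ∅ F hF0 (by simp)
      have eA : (∅ ∪ (↑F : Set (Fin n → List A))) = Sk := by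
        simp [hFdef, Set.Finite.coe_toFinset]
      have eB : (∅ ∪ ⋃ u ∈ F, (Function.update u i₀) '' (P i₀)) = Sk1 := by
        rw [Set.empty_union]
        ext v
        simp only [Set.mem_iUnion, Set.mem_image, exists_prop]
        constructor
        · rintro ⟨u, hu, y, hy, rfl⟩
          have huSk := (hFmem u).mp hu
          intro i
          by_cases hii : i = i₀
          · subst hii
            rw [if_pos (by simp [hi₀])]
            simpa using hy
          · have hne : (i : ℕ) ≠ k := fun h => hii (Fin.ext (by simp [hi₀, h]))
            rw [Function.update_of_ne hii]
            have := huSk i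
            by_cases h : (i : ℕ) < k
            · rw [if_pos h] at this; rw [if_pos (by omega)]; exact this
            · rw [if_neg h] at this; rw [if_neg (by omega)]; exact this
        · intro hv
          refine ⟨Function.update v i₀ [], ?_, v i₀, ?_, ?_⟩
          · rw [hFmem]
            intro i
            by_cases hii : i = i₀
            · subst hii; rw [if_neg (by simp [hi₀]), Function.update_self]
            · have hne : (i : ℕ) ≠ k := fun h => hii (Fin.ext (by simp [hi₀, h]))
              rw [Function.update_of_ne hii]
              have := hv i
              by_cases h : (i : ℕ) < k
              · rw [if_pos (by omega)] at this; rw [if_pos h]; exact this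
              · rw [if_neg (by omega)] at this; rw [if_neg h]; exact this
          · have := hv i₀
            rwa [if_pos (by simp [hi₀])] at this
          · rw [Function.update_idem, Function.update_eq_self]
      rw [eA, eB] at hgrow
      exact ih.trans hgrow
    · have he : Sk1 = Sk := by
        ext u
        have : ∀ i : Fin n, ((i : ℕ) < k ↔ (i : ℕ) < k + 1) := by
          intro i; have := i.isLt; omega
        simp only [hSkdef, hSk1def, Set.mem_setOf_eq]
        constructor <;> intro h i <;> [rw [if_congr (this i) rfl rfl]; rw [← if_congr (this i) rfl rfl]] <;> exact h i
      rw [he]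
      exact ih

theorem stmt_9 {A : Type*} [Fintype A] (hA : 2 ≤ Fintype.card A)
    {n : ℕ} (hn : 1 ≤ n) (S : Set (Fin n → List A))
    (hfin : S.Finite) (hprod : IsProductCode S) (hmax : MaxJoinlessCode S) :
    Reachable {fun _ => ([] : List A)} S := by
  classical
  obtain ⟨P, hPcode, hSeq⟩ := hprod
  -- S is nonempty
  have hSne : S.Nonempty := by
    by_contra h
    rw [Set.not_nonempty_iff_eq_empty] at h
    have hjl : JoinlessCode ({fun _ => ([] : List A)} : Set (Fin n → List A)) := by
      rintro u hu v hv huv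
      simp only [Set.mem_singleton_iff] at hu hv
      exact absurd (hu.trans hv.symm) huv
    have := hmax.2 _ hjl (by rw [h]; exact Set.empty_subset _)
    rw [h] at this
    exact (Set.singleton_nonempty _).ne_empty this.symm
  obtain ⟨u₀, hu₀⟩ := hSne
  have hu₀P : ∀ i, u₀ i ∈ P i := by
    have := hSeq ▸ hu₀; exact this
  -- each P i is finite
  have hfinP : ∀ i, (P i).Finite := by
    intro i
    refine Set.Finite.subset (hfin.image (fun u => u i)) ?_
    intro x hx
    refine ⟨Function.update u₀ i x, ?_, Function.update_self i x u₀⟩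
    rw [hSeq]
    intro j
    by_cases hj : j = i
    · subst hj; rwa [Function.update_self]
    · rw [Function.update_of_ne hj]; exact hu₀P j
  -- each P i is a maximal prefix code
  have hmaxP : ∀ i, MaxPrefixCode (P i) := by
    intro i
    refine ⟨hPcode i, ?_⟩
    intro w
    by_contra hcon
    push_neg at hcon
    set u' := Function.update u₀ i w with hu'
    have hu'S : u' ∉ S := by
      intro hmem
      have : u' i ∈ P i := (hSeq ▸ hmem) i
      rw [hu', Function.update_self] at this
      exact (hcon w this).1 (List.prefix_refl w)
    have hjl : JoinlessCode (insert u' S) := by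
      rintro x hx y hy hxy hJ
      rcases hx with rfl | hx
      · rcases hy with rfl | hy
        · exact hxy rfl
        · have hyP : y i ∈ P i := (hSeq ▸ hy) i
          have := hJ i
          rw [hu', Function.update_self] at this
          rcases this with h | h
          · exact (hcon (y i) hyP).2 h
          · exact (hcon (y i) hyP).1 h
      · rcases hy with rfl | hy
        · have hxP : x i ∈ P i := (hSeq ▸ hx) i
          have := hJ i
          rw [hu', Function.update_self] at this
          rcases this with h | h
          · exact (hcon (x i) hxP).1 h
          · exact (hcon (x i) hxP).2 h
        · exact hmax.1 x hx y hy hxy hJ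
    have := hmax.2 _ hjl (Set.subset_insert u' S)
    exact hu'S (this ▸ Set.mem_insert u' S)
  -- each P i is reachable in one dimension
  have hreach1 : ∀ i, Relation.ReflTransGen Step1 {([] : List A)} (P i) :=
    fun i => one_dim hA (P i).ncard (P i) (hfinP i) le_rfl (hmaxP i)
  have hchain := chain P hfinP hreach1 n
  have hfinal : {u : Fin n → List A | ∀ i : Fin n, if (i : ℕ) < n then u i ∈ P i else u i = []} = S := by
    rw [hSeq]
    ext u
    simp only [Set.mem_setOf_eq]
    constructor <;> intro h i
    · have := h i; rwa [if_pos i.isLt] at this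
    · rw [if_pos i.isLt]; exact h i
  rw [hfinal] at hchain
  exact hchain
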